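/- If a nonzero polynomial h(z) ∈ C[z] is even (h(z) = h(-z)) and all its roots lie on a circle Γ in the Riemann sphere CP^1 (with a root at ∞ of multiplicity (deg bound) - deg h if h has degree less than the degree bound), and Γ contains at least 3 of these symmetric root pairs, then Γ is invariant under z ↦ -z; hence Γ is either a line through 0 (a rotation of RP^1, passing through 0 and ∞) or a circle centered at 0 (a dilatation of the unit circle). -/

import Mathlib

open Polynomial

/-- the map `z ↦ -z` on `ℂP¹ = ℂ ∪ {∞}` (with `∞` encoded as `none`) -/
def negPt : Option ℂ → Option ℂ
  | none => none
  | some z => some (-z)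

/-- A circle in `ℂP¹`: either a line in `ℂ` together with `∞`, or a Euclidean
circle in `ℂ`. -/
def IsCircleCP1 (Γ : Set (Option ℂ)) : Prop :=
  (∃ p d : ℂ, d ≠ 0 ∧ Γ = {w | w = none ∨ ∃ t : ℝ, w = some (p + (t : ℂ) * d)}) ∨
  (∃ z₀ : ℂ, ∃ r : ℝ, 0 < r ∧ Γ = {w | ∃ z : ℂ, w = some z ∧ ‖z - z₀‖ = r})

/-- three distinct elements of a set of `ncard ≥ 3` -/
lemma exists_three_of_ncard {α : Type*} (s : Set α) (hs : 3 ≤ s.ncard) :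
    ∃ a b c, a ∈ s ∧ b ∈ s ∧ c ∈ s ∧ a ≠ b ∧ a ≠ c ∧ b ≠ c := by
  have hfin : s.Finite := by
    by_contra hinf
    rw [Set.Infinite.ncard hinf] at hs; omega
  obtain ⟨a, ha⟩ := Set.nonempty_of_ncard_ne_zero (s := s) (by omega)
  have h2 : 2 ≤ (s \ {a}).ncard := by
    rw [Set.ncard_diff_singleton_of_mem ha]; omega
  obtain ⟨b, hb⟩ := Set.nonempty_of_ncard_ne_zero (s := s \ {a}) (by omega)
  have h1 : 1 ≤ ((s \ {a}) \ {b}).ncard := by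
    rw [Set.ncard_diff_singleton_of_mem hb]; omega
  obtain ⟨c, hc⟩ := Set.nonempty_of_ncard_ne_zero (s := (s \ {a}) \ {b}) (by omega)
  refine ⟨a, b, c, ha, hb.1, hc.1.1, ?_, ?_, ?_⟩
  · exact fun e => hb.2 (by simp [e])
  · exact fun e => hc.1.2 (by simp [e])
  · exact fun e => hc.2 (by simp [e])

/-- If a nonzero even polynomial `h` (of degree bound `d`) has all its roots —
including a root at `∞` when `deg h < d` — on a circle `Γ` in `ℂP¹`, and the
root set has at least 3 distinct points, then `Γ` is invariant under `z ↦ -z`;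
hence `Γ` is either a line through `0` (together with `∞`) or a circle centered
at `0`. -/
theorem circle_symmetric_of_even_roots (d : ℕ) (h : Polynomial ℂ) (hne : h ≠ 0)
    (heven : h.comp (-Polynomial.X) = h) (hdeg : h.natDegree ≤ d)
    (Γ : Set (Option ℂ)) (hΓ : IsCircleCP1 Γ) (R : Set (Option ℂ))
    (hR : R = (fun z => (some z : Option ℂ)) '' {z | h.IsRoot z} ∪
      (if h.natDegree < d then {(none : Option ℂ)} else ∅))
    (hsub : R ⊆ Γ) (hcard : 3 ≤ R.ncard) :
    negPt '' Γ = Γ ∧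
      ((∃ e : ℂ, e ≠ 0 ∧ Γ = {w | w = none ∨ ∃ t : ℝ, w = some ((t : ℂ) * e)}) ∨
        (∃ r : ℝ, 0 < r ∧ Γ = {w | ∃ z : ℂ, w = some z ∧ ‖z‖ = r})) := by
  -- roots come in pairs ±z
  have hroot : ∀ z : ℂ, h.IsRoot z → h.IsRoot (-z) := by
    intro z hz
    have h2 : h.eval (-z) = h.eval z := by
      have := congrArg (Polynomial.eval z) heven
      simpa [Polynomial.eval_comp] using this
    simpa [Polynomial.IsRoot, h2] using hz
  rcases hΓ with ⟨p, dd, hdd, hΓeq⟩ | ⟨z₀, r, hr, hΓeq⟩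
  · -- line case
    -- get a finite point of R
    obtain ⟨a, haR, hane⟩ := Set.exists_ne_of_one_lt_ncard (s := R)
      (by omega : 1 < R.ncard) (none : Option ℂ)
    have hz : ∃ z : ℂ, a = some z ∧ h.IsRoot z := by
      rw [hR] at haR
      rcases haR with ⟨z, hzr, rfl⟩ | hn
      · exact ⟨z, rfl, hzr⟩
      · exfalso; apply hane
        split_ifs at hn with _
        · simpa using hn
        · simp at hn
    obtain ⟨z, rfl, hzr⟩ := hz
    have hzΓ : (some z : Option ℂ) ∈ Γ := hsub haR
    have hnzΓ : (some (-z) : Option ℂ) ∈ Γ := by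
      apply hsub; rw [hR]; left; exact ⟨-z, hroot z hzr, rfl⟩
    rw [hΓeq] at hzΓ hnzΓ
    rcases hzΓ with h0 | ⟨t₁, ht₁⟩; · simp at h0
    rcases hnzΓ with h0 | ⟨t₂, ht₂⟩; · simp at h0
    have ht₁' : z = p + (t₁ : ℂ) * dd := by simpa using ht₁
    have ht₂' : -z = p + (t₂ : ℂ) * dd := by simpa using ht₂
    have hp : p = -(((t₁ : ℂ) + (t₂ : ℂ)) / 2) * dd := by
      linear_combination (-1/2 : ℂ) * ht₁' + (-1/2 : ℂ) * ht₂'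
    have hΓ' : Γ = {w | w = none ∨ ∃ t : ℝ, w = some ((t : ℂ) * dd)} := by
      rw [hΓeq]
      ext w
      simp only [Set.mem_setOf_eq]
      constructor
      · rintro (rfl | ⟨t, rfl⟩)
        · exact Or.inl rfl
        · refine Or.inr ⟨t - (t₁ + t₂) / 2, ?_⟩
          congr 1
          rw [hp]; push_cast; ring
      · rintro (rfl | ⟨t, rfl⟩)
        · exact Or.inl rfl
        · refine Or.inr ⟨t + (t₁ + t₂) / 2, ?_⟩
          congr 1
          rw [hp]; push_cast; ring
    constructor
    · rw [hΓ']
      ext w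
      simp only [Set.mem_image, Set.mem_setOf_eq]
      constructor
      · rintro ⟨v, (rfl | ⟨t, rfl⟩), rfl⟩
        · exact Or.inl rfl
        · refine Or.inr ⟨-t, ?_⟩
          simp only [negPt]
          congr 1
          push_cast; ring
      · rintro (rfl | ⟨t, rfl⟩)
        · exact ⟨none, Or.inl rfl, rfl⟩
        · refine ⟨some (((-t : ℝ) : ℂ) * dd), Or.inr ⟨-t, rfl⟩, ?_⟩
          simp only [negPt]
          congr 1
          push_cast; ring
    · exact Or.inl ⟨dd, hdd, hΓ'⟩
  · -- circle case
    have hnoneΓ : (none : Option ℂ) ∉ Γ := by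
      rw [hΓeq]; rintro ⟨z, hz, -⟩; exact nomatch hz
    have hlt : ¬ h.natDegree < d := by
      intro hlt
      exact hnoneΓ (hsub (by rw [hR]; right; simp [hlt]))
    have hRimg : R = (fun z => (some z : Option ℂ)) '' {z | h.IsRoot z} := by
      rw [hR, if_neg hlt, Set.union_empty]
    -- each root z lies on the circle, and so does -z
    have hkey : ∀ z : ℂ, h.IsRoot z →
        ‖z - z₀‖ = r ∧ ‖-z - z₀‖ = r := by
      intro z hz
      have h1 : (some z : Option ℂ) ∈ Γ := hsub (by rw [hRimg]; exact ⟨z, hz, rfl⟩)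
      have h2 : (some (-z) : Option ℂ) ∈ Γ := hsub (by rw [hRimg]; exact ⟨-z, hroot z hz, rfl⟩)
      rw [hΓeq] at h1 h2
      obtain ⟨w1, hw1, habs1⟩ := h1
      obtain ⟨w2, hw2, habs2⟩ := h2
      have e1 : w1 = z := by injection hw1.symm
      have e2 : w2 = -z := by injection hw2.symm
      exact ⟨e1 ▸ habs1, e2 ▸ habs2⟩
    -- z₀ = 0
    have hz₀ : z₀ = 0 := by
      by_contra hz₀ne
      obtain ⟨z₁, z₂, z₃, h1, h2, h3, h12, h13, h23⟩ :=
        exists_three_of_ncard {z : ℂ | h.IsRoot z} (by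
          rw [hRimg] at hcard
          rwa [Set.ncard_image_of_injective _ (Option.some_injective ℂ)] at hcard)
      set a := z₀.re with ha
      set b := z₀.im with hb
      have hab : a ^ 2 + b ^ 2 ≠ 0 := by
        intro hab0
        apply hz₀ne
        have ha0 : a = 0 := by nlinarith [sq_nonneg a, sq_nonneg b]
        have hb0 : b = 0 := by nlinarith [sq_nonneg a, sq_nonneg b]
        exact Complex.ext ha0 hb0
      have key : ∀ z : ℂ, h.IsRoot z →
          a * z.re + b * z.im = 0 ∧ z.re ^ 2 + z.im ^ 2 = r ^ 2 - a ^ 2 - b ^ 2 := by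
        intro z hz
        obtain ⟨habs1, habs2⟩ := hkey z hz
        have e1 : (z.re - a) ^ 2 + (z.im - b) ^ 2 = r ^ 2 := by
          have h2 : Complex.normSq (z - z₀) = r ^ 2 := by rw [← Complex.sq_norm, habs1]
          simpa [Complex.normSq_apply, Complex.sub_re, Complex.sub_im, sq] using h2
        have e2 : (-z.re - a) ^ 2 + (-z.im - b) ^ 2 = r ^ 2 := by
          have h2 : Complex.normSq (-z - z₀) = r ^ 2 := by rw [← Complex.sq_norm, habs2]
          simpa [Complex.normSq_apply, Complex.sub_re, Complex.sub_im, Complex.neg_re,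
            Complex.neg_im, sq] using h2
        constructor
        · linear_combination (-1/4 : ℝ) * e1 + (1/4 : ℝ) * e2
        · linear_combination (1/2 : ℝ) * e1 + (1/2 : ℝ) * e2
      -- the parameter u for each root
      have hu : ∀ z : ℂ, h.IsRoot z →
          (a * z.im - b * z.re) ^ 2 = (a ^ 2 + b ^ 2) * (r ^ 2 - a ^ 2 - b ^ 2) ∧
          z.re * (a ^ 2 + b ^ 2) = -b * (a * z.im - b * z.re) ∧
          z.im * (a ^ 2 + b ^ 2) = a * (a * z.im - b * z.re) := by
        intro z hz
        obtain ⟨hl, hc⟩ := key z hz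
        refine ⟨by linear_combination (a^2+b^2) * hc - (a*z.re + b*z.im) * hl,
          by linear_combination a * hl, by linear_combination b * hl⟩
      set u₁ := a * z₁.im - b * z₁.re with hu₁
      set u₂ := a * z₂.im - b * z₂.re with hu₂
      set u₃ := a * z₃.im - b * z₃.re with hu₃
      obtain ⟨q1, x1, y1⟩ := hu z₁ h1
      obtain ⟨q2, x2, y2⟩ := hu z₂ h2
      obtain ⟨q3, x3, y3⟩ := hu z₃ h3
      have hne' : ∀ zi zj : ℂ, zi ≠ zj →
          (zi.re * (a^2+b^2) = -b * (a * zi.im - b * zi.re)) →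
          (zi.im * (a^2+b^2) = a * (a * zi.im - b * zi.re)) →
          (zj.re * (a^2+b^2) = -b * (a * zj.im - b * zj.re)) →
          (zj.im * (a^2+b^2) = a * (a * zj.im - b * zj.re)) →
          (a * zi.im - b * zi.re) ≠ (a * zj.im - b * zj.re) := by
        intro zi zj hij xi yi xj yj he
        apply hij
        apply Complex.ext
        · have : zi.re * (a^2+b^2) = zj.re * (a^2+b^2) := by rw [xi, xj, he]
          exact mul_right_cancel₀ hab this
        · have : zi.im * (a^2+b^2) = zj.im * (a^2+b^2) := by rw [yi, yj, he]
          exact mul_right_cancel₀ hab this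
      have n12 : u₁ ≠ u₂ := hne' z₁ z₂ h12 x1 y1 x2 y2
      have n13 : u₁ ≠ u₃ := hne' z₁ z₃ h13 x1 y1 x3 y3
      have n23 : u₂ ≠ u₃ := hne' z₂ z₃ h23 x2 y2 x3 y3
      -- u₁² = u₂² = u₃² with pairwise distinct values : contradiction
      have s12 : u₂ = -u₁ := by
        have : (u₁ - u₂) * (u₁ + u₂) = 0 := by linear_combination q1 - q2
        rcases mul_eq_zero.mp this with h' | h'
        · exact absurd (by linarith : u₁ = u₂) n12
        · linarith
      have s13 : u₃ = -u₁ := by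
        have : (u₁ - u₃) * (u₁ + u₃) = 0 := by linear_combination q1 - q3
        rcases mul_eq_zero.mp this with h' | h'
        · exact absurd (by linarith : u₁ = u₃) n13
        · linarith
      exact n23 (s12.trans s13.symm)
    subst hz₀
    have hΓ' : Γ = {w | ∃ z : ℂ, w = some z ∧ ‖z‖ = r} := by
      rw [hΓeq]; simp only [sub_zero]
    constructor
    · rw [hΓ']
      ext w
      simp only [Set.mem_image, Set.mem_setOf_eq]
      constructor
      · rintro ⟨v, ⟨z, rfl, hz⟩, rfl⟩
        exact ⟨-z, rfl, by simpa using hz⟩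
      · rintro ⟨z, rfl, hz⟩
        exact ⟨some (-z), ⟨-z, rfl, by simpa using hz⟩, by simp [negPt]⟩
    · exact Or.inr ⟨r, hr, hΓ'⟩
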